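/- The ring B = ℤ[g,h]/(g² − 4g, h² − 2h, gh − 2g) is a free ℤ-module of rank 3, with basis given by the images of 1, g, and h. -/

import Mathlib

/-!
STATEMENT 13: The ring `B = ℤ[g,h]/(g² − 4g, h² − 2h, gh − 2g)` is a free
`ℤ`-module of rank 3, with basis given by the images of `1`, `g`, and `h`.
Here `g = X 0` and `h = X 1`.
-/

open MvPolynomial

/-- The ideal `(g² − 4g, h² − 2h, gh − 2g)` in `ℤ[g,h]`. -/
noncomputable abbrev IB : Ideal (MvPolynomial (Fin 2) ℤ) :=
  Ideal.span {X 0 ^ 2 - 4 * X 0, X 1 ^ 2 - 2 * X 1, X 0 * X 1 - 2 * X 0}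

/-- The integral Burnside ring presentation `B = ℤ[g,h]/(g² − 4g, h² − 2h, gh − 2g)`. -/
abbrev B : Type := MvPolynomial (Fin 2) ℤ ⧸ IB

noncomputable def evB (p : Fin 2 → ℤ)
    (h0 : eval p (X 0 ^ 2 - 4 * X 0 : MvPolynomial (Fin 2) ℤ) = 0)
    (h1 : eval p (X 1 ^ 2 - 2 * X 1 : MvPolynomial (Fin 2) ℤ) = 0)
    (h2 : eval p (X 0 * X 1 - 2 * X 0 : MvPolynomial (Fin 2) ℤ) = 0) : B →+* ℤ :=
  Ideal.Quotient.lift IB (eval p) (by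
    intro a ha
    rw [← RingHom.mem_ker]
    refine Ideal.span_le.mpr ?_ ha
    intro f hf
    simp only [Set.mem_insert_iff, Set.mem_singleton_iff] at hf
    rcases hf with rfl | rfl | rfl <;> simp_all [RingHom.mem_ker])

@[simp] lemma evB_mk (p h0 h1 h2) (f : MvPolynomial (Fin 2) ℤ) :
    evB p h0 h1 h2 (Ideal.Quotient.mk IB f) = eval p f :=
  rfl

local notation "mkB" => Ideal.Quotient.mk IB

lemma mem_IB_of_gen (f : MvPolynomial (Fin 2) ℤ)
    (hf : f ∈ ({X 0 ^ 2 - 4 * X 0, X 1 ^ 2 - 2 * X 1, X 0 * X 1 - 2 * X 0} :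
      Set (MvPolynomial (Fin 2) ℤ))) : f ∈ IB := Ideal.subset_span hf

lemma rel_key (c : ℤ) (f g : MvPolynomial (Fin 2) ℤ) (h : f - (c : MvPolynomial (Fin 2) ℤ) * g ∈ IB) :
    mkB f = c • mkB g := by
  rw [zsmul_eq_mul, ← map_intCast (Ideal.Quotient.mk IB) c, ← map_mul, Ideal.Quotient.eq]
  exact h

lemma rel_gg : mkB (X 0) * mkB (X 0) = (4 : ℤ) • mkB (X 0) := by
  rw [← map_mul]
  refine rel_key 4 _ _ ?_
  have : X 0 * X 0 - ((4:ℤ) : MvPolynomial (Fin 2) ℤ) * X 0 =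
      (X 0 ^ 2 - 4 * X 0 : MvPolynomial (Fin 2) ℤ) := by push_cast; ring
  rw [this]; exact mem_IB_of_gen _ (by simp)

lemma rel_hh : mkB (X 1) * mkB (X 1) = (2 : ℤ) • mkB (X 1) := by
  rw [← map_mul]
  refine rel_key 2 _ _ ?_
  have : X 1 * X 1 - ((2:ℤ) : MvPolynomial (Fin 2) ℤ) * X 1 =
      (X 1 ^ 2 - 2 * X 1 : MvPolynomial (Fin 2) ℤ) := by push_cast; ring
  rw [this]; exact mem_IB_of_gen _ (by simp)

lemma rel_gh : mkB (X 0) * mkB (X 1) = (2 : ℤ) • mkB (X 0) := by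
  rw [← map_mul]
  refine rel_key 2 _ _ ?_
  have : X 0 * X 1 - ((2:ℤ) : MvPolynomial (Fin 2) ℤ) * X 0 =
      (X 0 * X 1 - 2 * X 0 : MvPolynomial (Fin 2) ℤ) := by push_cast; ring
  rw [this]; exact mem_IB_of_gen _ (by simp)

set_option synthInstance.maxHeartbeats 1000000 in
theorem burnside_C4_free_rank_three :
    ∃ b : Module.Basis (Fin 3) ℤ B,
      b 0 = 1 ∧
      b 1 = Ideal.Quotient.mk IB (X 0) ∧
      b 2 = Ideal.Quotient.mk IB (X 1) := by
  set s : Fin 3 → B := ![1, mkB (X 0), mkB (X 1)] with hs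
  have hs0 : s 0 = 1 := rfl
  have hs1 : s 1 = mkB (X 0) := rfl
  have hs2 : s 2 = mkB (X 1) := rfl
  have h0 : (1 : B) ∈ Submodule.span ℤ (Set.range s) :=
    hs0 ▸ Submodule.subset_span (Set.mem_range_self 0)
  have h1 : mkB (X 0) ∈ Submodule.span ℤ (Set.range s) :=
    hs1 ▸ Submodule.subset_span (Set.mem_range_self 1)
  have h2 : mkB (X 1) ∈ Submodule.span ℤ (Set.range s) :=
    hs2 ▸ Submodule.subset_span (Set.mem_range_self 2)
  have hspan : ∀ x : B, x ∈ Submodule.span ℤ (Set.range s) := by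
    have mulX : ∀ n : Fin 2, ∀ x ∈ Submodule.span ℤ (Set.range s),
        x * mkB (X n) ∈ Submodule.span ℤ (Set.range s) := by
      intro n x hx
      induction hx using Submodule.span_induction with
      | mem y hy =>
        obtain ⟨i, rfl⟩ := hy
        fin_cases i <;> fin_cases n
        · show (1 : B) * mkB (X 0) ∈ _
          rw [one_mul]; exact h1
        · show (1 : B) * mkB (X 1) ∈ _
          rw [one_mul]; exact h2
        · show mkB (X 0) * mkB (X 0) ∈ _
          rw [rel_gg]; exact Submodule.smul_mem _ _ h1
        · show mkB (X 0) * mkB (X 1) ∈ _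
          rw [rel_gh]; exact Submodule.smul_mem _ _ h1
        · show mkB (X 1) * mkB (X 0) ∈ _
          rw [mul_comm, rel_gh]; exact Submodule.smul_mem _ _ h1
        · show mkB (X 1) * mkB (X 1) ∈ _
          rw [rel_hh]; exact Submodule.smul_mem _ _ h2
      | zero => rw [zero_mul]; exact Submodule.zero_mem _
      | add a b _ _ ha hb => rw [add_mul]; exact Submodule.add_mem _ ha hb
      | smul c a _ ha => rw [smul_mul_assoc]; exact Submodule.smul_mem _ c ha
    intro x
    obtain ⟨p, rfl⟩ := Ideal.Quotient.mk_surjective x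
    induction p using MvPolynomial.induction_on with
    | C a =>
      have : mkB (C a) = a • (1 : B) := by
        rw [eq_intCast (MvPolynomial.C : ℤ →+* MvPolynomial (Fin 2) ℤ) a,
          map_intCast, zsmul_eq_mul, mul_one]
      rw [this]; exact Submodule.smul_mem _ a h0
    | add p q hp hq => rw [map_add]; exact Submodule.add_mem _ hp hq
    | mul_X p n hp => rw [map_mul]; exact mulX n _ hp
  -- linear independence via evaluation maps
  have hli : LinearIndependent ℤ s := by
    rw [Fintype.linearIndependent_iff]
    intro c hc
    have key : ∀ (p : Fin 2 → ℤ)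
        (h0' : eval p (X 0 ^ 2 - 4 * X 0 : MvPolynomial (Fin 2) ℤ) = 0)
        (h1' : eval p (X 1 ^ 2 - 2 * X 1 : MvPolynomial (Fin 2) ℤ) = 0)
        (h2' : eval p (X 0 * X 1 - 2 * X 0 : MvPolynomial (Fin 2) ℤ) = 0),
        c 0 + c 1 * p 0 + c 2 * p 1 = 0 := by
      intro p h0' h1' h2'
      have := congrArg (evB p h0' h1' h2') hc
      simp only [Fin.sum_univ_three, map_add, map_zero] at this
      rw [hs0, hs1, hs2] at this
      simpa [zsmul_eq_mul, mul_one] using this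
    have k0 := key ![0, 0] (by simp) (by simp) (by simp)
    have k1 := key ![0, 2] (by simp) (by simp) (by simp)
    have k2 := key ![4, 2] (by simp) (by simp) (by simp)
    simp only [Matrix.cons_val_zero, Matrix.cons_val_one, Matrix.head_cons] at k0 k1 k2
    obtain ⟨e0, e1, e2⟩ : c 0 = 0 ∧ c 1 = 0 ∧ c 2 = 0 := ⟨by omega, by omega, by omega⟩
    intro i
    fin_cases i
    · exact e0
    · exact e1
    · exact e2
  refine ⟨Module.Basis.mk hli (fun x _ => hspan x), ?_, ?_, ?_⟩ <;>
    simp [Module.Basis.mk_apply, hs0, hs1, hs2]
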